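/- Let (Z(n)) be the bear process on {1,...,N} (uniform step selection, move down to selected step if lower or equal, up by one if higher), and let T be an independent geometric time: at each step, independently with probability p ∈ (0,1) the process is stopped before moving. Let Z(T⁻) denote the position at the step immediately before stopping. Then P(Z(T⁻) ≥ h) = (1-p)^{h-1} · ∏_{i=1}^{h-1}(1 - i/N) for all 1 ≤ h ≤ N. -/

import Mathlib

set_option maxHeartbeats 1000000

noncomputable def bearC (N : ℕ) : ℕ → ℝ := fun y => ∏ i ∈ Finset.Icc 1 (y-1), (1 - (i:ℝ)/(N:ℝ))

noncomputable def bearV (N : ℕ) : ℕ → ℕ → ℝ := fun n y => if y ≤ n+1 then bearC N y else 0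

lemma bearC_one (N : ℕ) : bearC N 1 = 1 := by simp [bearC]

lemma bearC_succ (N : ℕ) (y : ℕ) (hy : 1 ≤ y) :
    bearC N (y+1) = bearC N y * (1 - (y:ℝ)/(N:ℝ)) := by
  obtain ⟨z, rfl⟩ : ∃ z, y = z + 1 := ⟨y - 1, by omega⟩
  simp only [bearC, Nat.add_sub_cancel]
  rw [Finset.prod_Icc_succ_top (by omega : 1 ≤ z + 1)]

lemma bearC_top (N : ℕ) (hN : 1 ≤ N) : bearC N (N+1) = 0 := by
  simp only [bearC, Nat.add_sub_cancel]
  apply Finset.prod_eq_zero (Finset.mem_Icc.mpr ⟨hN, le_refl N⟩)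
  have : (N:ℝ) ≠ 0 := by positivity
  field_simp
  norm_num

lemma tele (g : ℕ → ℝ) : ∀ b a, a ≤ b → ∑ z ∈ Finset.Icc a b, (g z - g (z+1)) = g a - g (b+1) := by
  intro b
  induction b with
  | zero =>
    intro a ha
    interval_cases a
    simp
  | succ b ih =>
    intro a ha
    rcases Nat.lt_or_ge a (b+1) with h | h
    · rw [Finset.sum_Icc_succ_top ha, ih a (by omega)]
      ring
    · have : a = b + 1 := by omega
      subst this
      simp

lemma bear_key (N : ℕ) (hN : 1 ≤ N)
    (p : ℕ → ℕ → ℝ)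
    (h0 : ∀ h, p 0 h = if h = 1 then 1 else 0)
    (hrec : ∀ n : ℕ, ∀ h ∈ Finset.Icc 1 N,
      p (n + 1) h = (1 / (N : ℝ)) * ∑ z ∈ Finset.Icc h N, p n z +
        (if 2 ≤ h then (((N : ℝ) - ((h : ℝ) - 1)) / (N : ℝ)) * p n (h - 1) else 0)) :
    ∀ n z, 1 ≤ z → z ≤ N → p n z = bearV N n z - bearV N n (z+1) := by
  have hN0 : (0:ℝ) < N := by exact_mod_cast hN
  have hNne : (N:ℝ) ≠ 0 := ne_of_gt hN0
  intro n
  induction n with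
  | zero =>
    intro z h1 h2
    rw [h0]
    by_cases hz : z = 1
    · subst hz
      simp [bearV, bearC_one]
    · have hz1 : ¬ z ≤ 1 := by omega
      have hz2 : ¬ z + 1 ≤ 1 := by omega
      simp [bearV, hz, hz1, hz2]
  | succ n ih =>
    intro z h1 h2
    have Ssum : ∀ a, 1 ≤ a → a ≤ N → ∑ w ∈ Finset.Icc a N, p n w = bearV N n a := by
      intro a ha1 ha2
      rw [Finset.sum_congr rfl (fun w hw => by
        obtain ⟨hw1, hw2⟩ := Finset.mem_Icc.mp hw
        exact ih w (by omega) hw2)]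
      rw [tele (bearV N n) N a ha2]
      have : bearV N n (N+1) = 0 := by
        simp only [bearV]
        split
        · exact bearC_top N hN
        · rfl
      rw [this, sub_zero]
    rw [hrec n z (Finset.mem_Icc.mpr ⟨h1, h2⟩), Ssum z h1 h2]
    by_cases hz2 : 2 ≤ z
    · rw [if_pos hz2, ih (z-1) (by omega) (by omega)]
      have hz1 : z - 1 + 1 = z := by omega
      rw [hz1]
      have hcast : ((z-1:ℕ):ℝ) = (z:ℝ) - 1 := by
        have := Nat.cast_sub (by omega : 1 ≤ z) (R := ℝ)
        simpa using this
      have e1 : bearC N z = bearC N (z-1) * (1 - ((z:ℝ)-1)/(N:ℝ)) := by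
        have := bearC_succ N (z-1) (by omega)
        rw [hz1, hcast] at this
        exact this
      have e2 : bearC N (z+1) = bearC N z * (1 - (z:ℝ)/(N:ℝ)) := bearC_succ N z (by omega)
      simp only [bearV]
      by_cases hA : z ≤ n + 1
      · rw [if_pos hA, if_pos (by omega : z - 1 ≤ n + 1), if_pos (by omega : z ≤ n + 1 + 1),
          if_pos (by omega : z + 1 ≤ n + 1 + 1), e2, e1]
        field_simp
        ring
      · by_cases hB : z = n + 2
        · rw [if_neg hA, if_pos (by omega : z - 1 ≤ n + 1), if_pos (by omega : z ≤ n + 1 + 1),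
            if_neg (by omega : ¬ z + 1 ≤ n + 1 + 1), e1]
          field_simp
          ring
        · rw [if_neg hA, if_neg (by omega : ¬ z - 1 ≤ n + 1), if_neg (by omega : ¬ z ≤ n + 1 + 1),
            if_neg (by omega : ¬ z + 1 ≤ n + 1 + 1)]
          ring
    · have : z = 1 := by omega
      subst this
      rw [if_neg hz2]
      simp only [bearV, if_pos (by omega : (1:ℕ) ≤ n + 1), if_pos (by omega : (1:ℕ) ≤ n + 1 + 1),
        if_pos (by omega : (1:ℕ) + 1 ≤ n + 1 + 1), bearC_one]
      rw [bearC_succ N 1 le_rfl, bearC_one]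
      field_simp
      push_cast
      ring

/-- The bear process stopped at an independent geometric time of parameter `pk`:
the position just before stopping satisfies
`P(Z(T⁻) ≥ h) = (1-pk)^{h-1} ∏_{i=1}^{h-1}(1 - i/N)`. -/
theorem stmt10 (N : ℕ) (hN : 1 ≤ N) (pk : ℝ) (hpk0 : 0 < pk) (hpk1 : pk < 1)
    (p : ℕ → ℕ → ℝ)
    (h0 : ∀ h, p 0 h = if h = 1 then 1 else 0)
    (hrec : ∀ n : ℕ, ∀ h ∈ Finset.Icc 1 N,
      p (n + 1) h = (1 / (N : ℝ)) * ∑ z ∈ Finset.Icc h N, p n z +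
        (if 2 ≤ h then (((N : ℝ) - ((h : ℝ) - 1)) / (N : ℝ)) * p n (h - 1) else 0))
    (h : ℕ) (hh1 : 1 ≤ h) (hhN : h ≤ N) :
    ∑' m : ℕ, pk * (1 - pk) ^ m * ∑ z ∈ Finset.Icc h N, p m z
      = (1 - pk) ^ (h - 1) * ∏ i ∈ Finset.Icc 1 (h - 1), (1 - (i : ℝ) / (N : ℝ)) := by
  have key := bear_key N hN p h0 hrec
  have hr0 : (0:ℝ) ≤ 1 - pk := by linarith
  have hr1 : 1 - pk < 1 := by linarith
  -- sums of p equal bearV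
  have Ssum : ∀ n a, 1 ≤ a → a ≤ N → ∑ w ∈ Finset.Icc a N, p n w = bearV N n a := by
    intro n a ha1 ha2
    rw [Finset.sum_congr rfl (fun w hw => by
      obtain ⟨hw1, hw2⟩ := Finset.mem_Icc.mp hw
      exact key n w (by omega) hw2)]
    rw [tele (bearV N n) N a ha2]
    have : bearV N n (N+1) = 0 := by
      simp only [bearV]
      split
      · exact bearC_top N hN
      · rfl
    rw [this, sub_zero]
  have htc : (∑' m : ℕ, pk * (1 - pk) ^ m * ∑ z ∈ Finset.Icc h N, p m z)
      = ∑' m : ℕ, pk * (1 - pk) ^ m * bearV N m h := by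
    apply tsum_congr
    intro m
    rw [Ssum m h hh1 hhN]
  rw [htc]
  set f : ℕ → ℝ := fun m => pk * (1 - pk) ^ m * bearV N m h with hf
  have hCnn : 0 ≤ bearC N h := by
    apply Finset.prod_nonneg
    intro i hi
    obtain ⟨hi1, hi2⟩ := Finset.mem_Icc.mp hi
    have : (i:ℝ) ≤ (N:ℝ) := by exact_mod_cast (by omega : i ≤ N)
    have hN0 : (0:ℝ) < N := by exact_mod_cast hN
    have : (i:ℝ)/(N:ℝ) ≤ 1 := by
      rw [div_le_one hN0]
      exact this
    linarith
  have hsummable : Summable f := by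
    refine Summable.of_nonneg_of_le (fun m => ?_) (fun m => ?_)
      ((summable_geometric_of_lt_one hr0 hr1).mul_left (pk * bearC N h))
    · simp only [hf, bearV]
      split
      · positivity
      · simp
    · simp only [hf, bearV]
      split
      · ring_nf
        exact le_refl _
      · calc pk * (1 - pk) ^ m * 0 = 0 := by ring
          _ ≤ pk * bearC N h * (1 - pk) ^ m := by positivity
  rw [← Summable.sum_add_tsum_nat_add (h - 1) hsummable]
  have hfin : ∑ i ∈ Finset.range (h - 1), f i = 0 := by
    apply Finset.sum_eq_zero
    intro i hi
    have hi' := Finset.mem_range.mp hi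
    simp only [hf, bearV, if_neg (by omega : ¬ h ≤ i + 1)]
    ring
  have htail : ∑' i : ℕ, f (i + (h - 1)) = pk * bearC N h * (1 - pk) ^ (h - 1) * pk⁻¹ := by
    have : ∀ i : ℕ, f (i + (h - 1)) = (pk * bearC N h * (1 - pk) ^ (h - 1)) * (1 - pk) ^ i := by
      intro i
      simp only [hf, bearV, if_pos (by omega : h ≤ i + (h - 1) + 1)]
      rw [pow_add]
      ring
    rw [tsum_congr this, tsum_mul_left, tsum_geometric_of_lt_one hr0 hr1]
    have : 1 - (1 - pk) = pk := by ring
    rw [this]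
  rw [hfin, htail, zero_add]
  have hpkne : pk ≠ 0 := ne_of_gt hpk0
  have : bearC N h = ∏ i ∈ Finset.Icc 1 (h - 1), (1 - (i : ℝ) / (N : ℝ)) := rfl
  rw [← this]
  field_simp
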